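/- Let x be a θ-cyclic point with cubic support graph G_x, and let U ⊆ V_n be a minimal critical cut of G_x (i.e., no proper subset S ⊂ U defines a critical cut of G_x). Then the contracted graph G_x^U contains no critical cuts. -/

import Mathlib

open scoped Classical

noncomputable section

namespace TSPPaper

variable {V : Type*} [Fintype V] [DecidableEq V]

/-- The sum of `x` over the edges crossing the cut `U` (each crossing edge counted once). -/
def cutSum (x : Sym2 V → ℝ) (U : Finset V) : ℝ :=
  ∑ u ∈ U, ∑ v ∈ Uᶜ, x s(u, v)

/-- Membership in the subtour elimination polytope `SUBT(K_n)`. -/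
def inSUBT (x : Sym2 V → ℝ) : Prop :=
  (∀ e : Sym2 V, e.IsDiag → x e = 0) ∧
  (∀ e : Sym2 V, 0 ≤ x e) ∧ (∀ e : Sym2 V, x e ≤ 1) ∧
  (∀ v : V, cutSum x {v} = 2) ∧
  (∀ U : Finset V, U.Nonempty → U ≠ Finset.univ → 2 ≤ cutSum x U)

/-- The simple graph underlying the support of a multigraph given by edge multiplicities. -/
def supportGraph (F : Sym2 V → ℕ) : SimpleGraph V where
  Adj u v := u ≠ v ∧ 0 < F s(u, v)
  symm := ⟨fun u v h => ⟨h.1.symm, by rw [Sym2.eq_swap]; exact h.2⟩⟩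
  loopless := ⟨fun u h => h.1 rfl⟩

/-- The support graph of a real edge vector. -/
def suppGraph (x : Sym2 V → ℝ) : SimpleGraph V where
  Adj u v := u ≠ v ∧ 0 < x s(u, v)
  symm := ⟨fun u v h => ⟨h.1.symm, by rw [Sym2.eq_swap]; exact h.2⟩⟩
  loopless := ⟨fun u h => h.1 rfl⟩

/-- Degree of a vertex in a multigraph given by edge multiplicities. -/
def multiDeg (F : Sym2 V → ℕ) (v : V) : ℕ := ∑ u : V, F s(v, u)

/-- A tour: a spanning connected Eulerian multigraph (with no loops). -/
def IsTour (F : Sym2 V → ℕ) : Prop :=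
  (∀ e : Sym2 V, e.IsDiag → F e = 0) ∧
  (∀ v : V, Even (multiDeg F v)) ∧
  (supportGraph F).Connected

/-- A tour using only edges in the support of `x`. -/
def IsTourSupp (x : Sym2 V → ℝ) (F : Sym2 V → ℕ) : Prop :=
  IsTour F ∧ ∀ e : Sym2 V, F e ≠ 0 → 0 < x e

/-- A tour of a (simple) graph `G`. -/
def IsTourOfGraph (G : SimpleGraph V) (F : Sym2 V → ℕ) : Prop :=
  IsTour F ∧ ∀ e : Sym2 V, F e ≠ 0 → e ∈ G.edgeSet

/-- Membership in `TSP(K_n)`: the convex hull of incidence vectors of tours. -/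
def inTSP (y : Sym2 V → ℝ) : Prop :=
  ∃ (k : ℕ) (F : Fin k → Sym2 V → ℕ) (lam : Fin k → ℝ),
    (∀ i, IsTour (F i)) ∧ (∀ i, 0 ≤ lam i) ∧ (∑ i, lam i = 1) ∧
    (∀ e : Sym2 V, y e = ∑ i, lam i * (F i e : ℝ))

/-- number of support edges incident on a vertex -/
def suppDeg (x : Sym2 V → ℝ) (v : V) : ℕ :=
  (Finset.univ.filter fun e : Sym2 V => 0 < x e ∧ v ∈ e).card

/-- A θ-cyclic point. -/
def IsCyclic (θ : ℝ) (x : Sym2 V → ℝ) : Prop :=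
  0 < θ ∧ θ ≤ 1 / 2 ∧ inSUBT x ∧
  (∀ e : Sym2 V, x e = 0 ∨ x e = θ ∨ x e = 1 - θ ∨ x e = 1) ∧
  (∀ v : V, suppDeg x v ≤ 3) ∧
  (∀ v : V, ∃ e : Sym2 V, v ∈ e ∧ x e = 1)

/-- The edges of the complete graph crossing the cut `U`. -/
def crossEdges (U : Finset V) : Finset (Sym2 V) :=
  Finset.univ.filter fun e : Sym2 V => ∃ u v : V, e = s(u, v) ∧ u ∈ U ∧ v ∉ U

/-- The support edges of `x` crossing the cut `U`. -/
def cutEdges (x : Sym2 V → ℝ) (U : Finset V) : Finset (Sym2 V) :=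
  (crossEdges U).filter fun e => 0 < x e

/-- The edges of the graph `G` crossing the cut `U`. -/
def cutEdgesG (G : SimpleGraph V) (U : Finset V) : Finset (Sym2 V) :=
  (crossEdges U).filter fun e => e ∈ G.edgeSet

/-- A critical cut of the support graph of `x`. -/
def IsCriticalCut (x : Sym2 V → ℝ) (U : Finset V) : Prop :=
  2 ≤ U.card ∧ 2 ≤ Uᶜ.card ∧
  (cutEdges x U).card = 3 ∧
  ((cutEdges x U).filter fun e => x e = 1).card = 1 ∧
  ∀ e ∈ cutEdges x U, ∀ f ∈ cutEdges x U, e ≠ f → ∀ w : V, w ∈ e → w ∈ f → False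

/-- Vertex set after contracting the complement of `U` to a single pseudovertex `none`. -/
abbrev Contracted (U : Finset V) := Option {u : V // u ∈ U}

/-- The contraction map sending every vertex outside of `U` to the pseudovertex. -/
def contractMap (U : Finset V) (w : V) : Contracted U :=
  if h : w ∈ U then some ⟨w, h⟩ else none

/-- The point induced on the contracted vertex set (loops are removed). -/
def contractPoint (x : Sym2 V → ℝ) (U : Finset V) : Sym2 (Contracted U) → ℝ :=
  fun d => if d.IsDiag then 0
    else ∑ e ∈ Finset.univ.filter (fun e : Sym2 V => Sym2.map (contractMap U) e = d), x e

/-- The eight allowed patterns, as multiplicity triples on `(e_u, f_u, g_u)`. -/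
def patternOK (a b c : ℕ) : Prop :=
  (a, b, c) = (2, 0, 0) ∨ (a, b, c) = (1, 1, 0) ∨ (a, b, c) = (1, 0, 1) ∨
  (a, b, c) = (2, 2, 0) ∨ (a, b, c) = (2, 0, 2) ∨ (a, b, c) = (2, 1, 1) ∨
  (a, b, c) = (1, 2, 1) ∨ (a, b, c) = (1, 1, 2)

/-- A handpicked tour (of the support of a cyclic point `x`): around every vertex `u` the
multiset of edges of the tour incident on `u` is one of the allowed patterns on the
1-edge and the two fractional edges at `u`. -/
def Handpicked (x : Sym2 V → ℝ) (F : Sym2 V → ℕ) : Prop :=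
  ∀ u : V, ∃ e f g : Sym2 V,
    u ∈ e ∧ u ∈ f ∧ u ∈ g ∧ e ≠ f ∧ e ≠ g ∧ f ≠ g ∧
    x e = 1 ∧ 0 < x f ∧ x f < 1 ∧ 0 < x g ∧ x g < 1 ∧
    (∀ e' : Sym2 V, 0 < x e' → u ∈ e' → e' = e ∨ e' = f ∨ e' = g) ∧
    patternOK (F e) (F f) (F g)

/-- `φ₂(e)`: total weight of the members of the combination in which `e` is doubled. -/
def phi2 {k : ℕ} (lam : Fin k → ℝ) (F : Fin k → Sym2 V → ℕ) (e : Sym2 V) : ℝ :=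
  ∑ i ∈ Finset.univ.filter (fun i : Fin k => F i e = 2), lam i

/-- Frequency of the pattern whose multiplicities on the edges `(e, f, g)` are given by `p`. -/
def patFreq {k : ℕ} (lam : Fin k → ℝ) (F : Fin k → Sym2 V → ℕ)
    (e f g : Sym2 V) (p : ℕ × ℕ × ℕ) : ℝ :=
  ∑ i ∈ Finset.univ.filter (fun i : Fin k => (F i e, F i f, F i g) = p), lam i

/-- The simple graph given by a finite set of edges. -/
def graphOfEdges (T : Finset (Sym2 V)) : SimpleGraph V where
  Adj u v := u ≠ v ∧ s(u, v) ∈ T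
  symm := ⟨fun u v h => ⟨h.1.symm, by rw [Sym2.eq_swap]; exact h.2⟩⟩
  loopless := ⟨fun u h => h.1 rfl⟩

/-- Degree of a vertex in an edge set. -/
def edgeDeg (T : Finset (Sym2 V)) (v : V) : ℕ := (T.filter fun e => v ∈ e).card

/-- A connector of the support graph of `x`: a connected spanning subgraph, no doubled edges. -/
def IsConnector (x : Sym2 V → ℝ) (T : Finset (Sym2 V)) : Prop :=
  (∀ e ∈ T, 0 < x e) ∧ (graphOfEdges T).Connected

/-- `M` is an induced matching of the support graph of `x` consisting of 1-edges. -/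
def IsInducedMatching (x : Sym2 V → ℝ) (M : Finset (Sym2 V)) : Prop :=
  (∀ e ∈ M, x e = 1) ∧
  (∀ e ∈ M, ∀ f ∈ M, e ≠ f → ∀ w : V, w ∈ e → w ∈ f → False) ∧
  (∀ e : Sym2 V, 0 < x e → (∀ w : V, w ∈ e → ∃ f ∈ M, w ∈ f) → e ∈ M)

/-- Property `P(v, M, Λ)` for a convex combination `{lam, T}` of connectors. -/
def PropertyP (x : Sym2 V → ℝ) (v : V) (M : Finset (Sym2 V)) (L : ℝ)
    {k : ℕ} (lam : Fin k → ℝ) (T : Fin k → Finset (Sym2 V)) : Prop :=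
  (∑ i ∈ Finset.univ.filter (fun i : Fin k => edgeDeg (T i) v = 1), lam i) = L ∧
  (∑ i ∈ Finset.univ.filter (fun i : Fin k => edgeDeg (T i) v = 3), lam i) = L ∧
  (∑ i ∈ Finset.univ.filter (fun i : Fin k => edgeDeg (T i) v = 2), lam i) = 1 - 2 * L ∧
  (∀ e ∈ M, ∀ w : V, w ∈ e → ∀ i, edgeDeg (T i) w = 2) ∧
  (∀ i, ((graphOfEdges (T i)).induce {u : V | u ≠ v}).Connected)

/-- An `O`-join of the support graph of `x`. -/
def IsOJoin (x : Sym2 V → ℝ) (O : Finset V) (J : Finset (Sym2 V)) : Prop :=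
  (∀ e ∈ J, 0 < x e) ∧ ∀ v : V, (Odd (edgeDeg J v) ↔ v ∈ O)

/-- An `O`-join of the graph `G`. -/
def IsOJoinOfGraph (G : SimpleGraph V) (O : Finset V) (J : Finset (Sym2 V)) : Prop :=
  (∀ e ∈ J, e ∈ G.edgeSet) ∧ ∀ v : V, (Odd (edgeDeg J v) ↔ v ∈ O)

/-- The support graph, after contracting the complement of `U`, of a multigraph on `V`
whose edges all have an endpoint in `U`. -/
def quotGraph (U : Finset V) (F : Sym2 V → ℕ) : SimpleGraph (Contracted U) where
  Adj a b := a ≠ b ∧ ∃ u v : V, 0 < F s(u, v) ∧ contractMap U u = a ∧ contractMap U v = b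
  symm := ⟨fun a b h => ⟨h.1.symm, by
    obtain ⟨u, v, h1, h2, h3⟩ := h.2
    exact ⟨v, u, by rw [Sym2.eq_swap]; exact h1, h3, h2⟩⟩⟩
  loopless := ⟨fun a h => h.1 rfl⟩

/-- A tour of the graph `G^U` obtained from `G` by contracting the complement of `U`,
encoded by the multiplicities of the surviving edges of `G` (those with an endpoint in `U`). -/
def IsTourOfContraction (G : SimpleGraph V) (U : Finset V) (F : Sym2 V → ℕ) : Prop :=
  (∀ e : Sym2 V, F e ≠ 0 → e ∈ G.edgeSet ∧ ∃ w, w ∈ e ∧ w ∈ U) ∧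
  (∀ u ∈ U, Even (multiDeg F u)) ∧
  Even (∑ u ∈ U, ∑ w ∈ Uᶜ, F s(u, w)) ∧
  (quotGraph U F).Connected

/-- The number of critical cuts of the support graph of `x`. -/
def criticalCutCount (x : Sym2 V → ℝ) : ℕ :=
  Set.ncard {U : Finset V | IsCriticalCut x U}

/-! ### Auxiliary lemmas for Statement 10 -/

lemma mem_crossEdges {U : Finset V} {e : Sym2 V} :
    e ∈ crossEdges U ↔ ∃ u v : V, e = s(u, v) ∧ u ∈ U ∧ v ∉ U := by
  simp [crossEdges]

lemma mem_cutEdges {x : Sym2 V → ℝ} {U : Finset V} {e : Sym2 V} :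
    e ∈ cutEdges x U ↔ (∃ u v : V, e = s(u, v) ∧ u ∈ U ∧ v ∉ U) ∧ 0 < x e := by
  simp [cutEdges, mem_crossEdges, Finset.mem_filter]

lemma crossEdges_compl (U : Finset V) : crossEdges Uᶜ = crossEdges U := by
  ext e
  simp only [mem_crossEdges, Finset.mem_compl]
  constructor
  · rintro ⟨u, v, rfl, hu, hv⟩
    exact ⟨v, u, Sym2.eq_swap, not_not.mp hv, hu⟩
  · rintro ⟨u, v, rfl, hu, hv⟩
    exact ⟨v, u, Sym2.eq_swap, hv, by simpa using hu⟩

lemma cutEdges_compl (x : Sym2 V → ℝ) (U : Finset V) : cutEdges x Uᶜ = cutEdges x U := by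
  unfold cutEdges
  rw [crossEdges_compl]

lemma IsCriticalCut.compl {x : Sym2 V → ℝ} {U : Finset V} (h : IsCriticalCut x U) :
    IsCriticalCut x Uᶜ := by
  obtain ⟨h1, h2, h3, h4, h5⟩ := h
  refine ⟨h2, by simpa using h1, by rwa [cutEdges_compl], by rwa [cutEdges_compl], ?_⟩
  rw [cutEdges_compl]
  exact h5

lemma contractMap_mem {U : Finset V} {u : V} (hu : u ∈ U) :
    contractMap U u = some ⟨u, hu⟩ := dif_pos hu

lemma contractMap_not_mem {U : Finset V} {u : V} (hu : u ∉ U) :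
    contractMap U u = none := dif_neg hu

lemma contractMap_ne_none {U : Finset V} {u : V} (hu : u ∈ U) :
    contractMap U u ≠ none := by
  rw [contractMap_mem hu]
  simp

lemma mem_of_contractMap_ne_none {U : Finset V} {u : V}
    (h : contractMap U u ≠ none) : u ∈ U := by
  by_contra hu
  exact h (contractMap_not_mem hu)

lemma contractMap_eq_some {U : Finset V} {p u : V} (hu : u ∈ U)
    (h : contractMap U p = contractMap U u) : p = u := by
  by_cases hp : p ∈ U
  · rw [contractMap_mem hp, contractMap_mem hu] at h
    exact congrArg Subtype.val (Option.some_injective _ h)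
  · rw [contractMap_not_mem hp, contractMap_mem hu] at h
    exact absurd h (by simp)

lemma contractPoint_some_some {x : Sym2 V → ℝ} (hx0 : ∀ e : Sym2 V, e.IsDiag → x e = 0)
    {U : Finset V} {u w : V} (hu : u ∈ U) (hw : w ∈ U) :
    contractPoint x U s(contractMap U u, contractMap U w) = x s(u, w) := by
  by_cases huw : u = w
  · subst huw
    rw [contractPoint, if_pos (by simp), (hx0 s(u, u) (by simp))]
  · rw [contractPoint, if_neg (by
      simp only [Sym2.mk_isDiag_iff, contractMap_mem hu, contractMap_mem hw,
        Option.some.injEq, Subtype.mk.injEq]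
      exact huw)]
    have hset : Finset.univ.filter
        (fun e : Sym2 V => Sym2.map (contractMap U) e = s(contractMap U u, contractMap U w))
        = {s(u, w)} := by
      ext e
      induction e using Sym2.ind with
      | _ p q =>
        simp only [Finset.mem_filter, Finset.mem_univ, true_and, Finset.mem_singleton,
          Sym2.map_pair_eq, Sym2.eq_iff]
        constructor
        · rintro (⟨h1, h2⟩ | ⟨h1, h2⟩)
          · exact Or.inl ⟨contractMap_eq_some hu h1, contractMap_eq_some hw h2⟩
          · exact Or.inr ⟨contractMap_eq_some hw h1, contractMap_eq_some hu h2⟩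
        · rintro (⟨rfl, rfl⟩ | ⟨rfl, rfl⟩) <;> simp
    rw [hset, Finset.sum_singleton]

lemma contractPoint_some_none {x : Sym2 V → ℝ} (hx0 : ∀ e : Sym2 V, e.IsDiag → x e = 0)
    (hge : ∀ e : Sym2 V, 0 ≤ x e)
    {U : Finset V} {u q : V} (hu : u ∈ U) (hq : q ∉ U)
    (huniq : ∀ q' : V, q' ∉ U → 0 < x s(u, q') → q' = q) :
    contractPoint x U s(contractMap U u, none) = x s(u, q) := by
  rw [contractPoint, if_neg (by
    simp [Sym2.mk_isDiag_iff, contractMap_mem hu])]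
  apply Finset.sum_eq_single_of_mem s(u, q)
  · simp [Sym2.map_pair_eq, contractMap_mem hu, contractMap_not_mem hq]
  · intro e he hne
    induction e using Sym2.ind with
    | _ p p' =>
      simp only [Finset.mem_filter, Finset.mem_univ, true_and, Sym2.map_pair_eq,
        Sym2.eq_iff] at he
      rcases eq_or_lt_of_le (hge s(p, p')) with h0 | hpos
      · exact h0.symm
      rcases he with ⟨h1, h2⟩ | ⟨h1, h2⟩
      · have hp : p = u := contractMap_eq_some hu h1
        subst hp
        have hp' : p' ∉ U := fun h => contractMap_ne_none h h2
        exact (hne (by rw [huniq p' hp' hpos])).elim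
      · have hp' : p' = u := contractMap_eq_some hu h2
        have hp : p ∉ U := fun h => contractMap_ne_none h h1
        have hpos' : 0 < x s(u, p) := by rw [← hp', Sym2.eq_swap]; exact hpos
        have hpq := huniq p hp hpos'
        exact (hne (by rw [hpq, hp', Sym2.eq_swap])).elim

lemma contractPoint_pos_none {x : Sym2 V → ℝ}
    {U : Finset V} {u : V} (hu : u ∈ U)
    (h : 0 < contractPoint x U s(contractMap U u, none)) :
    ∃ q : V, q ∉ U ∧ 0 < x s(u, q) := by
  rw [contractPoint, if_neg (by simp [Sym2.mk_isDiag_iff, contractMap_mem hu])] at h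
  have hex : ∃ e ∈ Finset.univ.filter
      (fun e : Sym2 V => Sym2.map (contractMap U) e = s(contractMap U u, none)),
      0 < x e := by
    by_contra hno
    push_neg at hno
    have : (∑ e ∈ Finset.univ.filter
        (fun e : Sym2 V => Sym2.map (contractMap U) e = s(contractMap U u, none)), x e) ≤ 0 :=
      Finset.sum_nonpos fun e he => hno e he
    linarith
  obtain ⟨e, he, hpos⟩ := hex
  induction e using Sym2.ind with
  | _ p p' =>
    simp only [Finset.mem_filter, Finset.mem_univ, true_and, Sym2.map_pair_eq,
      Sym2.eq_iff] at he
    rcases he with ⟨h1, h2⟩ | ⟨h1, h2⟩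
    · have hp : p = u := contractMap_eq_some hu h1
      subst hp
      exact ⟨p', fun hh => contractMap_ne_none hh h2, hpos⟩
    · have hp' : p' = u := contractMap_eq_some hu h2
      subst hp'
      exact ⟨p, fun hh => contractMap_ne_none hh h1, by rwa [Sym2.eq_swap] at hpos⟩

/-- Observation `obs:cornercut`. If `U` is a minimal critical cut of `G_x`,
then the contracted graph `G_x^U` (with its induced point) has no critical cuts. -/
theorem statement10 (n : ℕ) (hn : 3 ≤ n) (θ : ℝ) (x : Sym2 (Fin n) → ℝ)
    (hx : IsCyclic θ x) (hcubic : ∀ v : Fin n, suppDeg x v = 3)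
    (U : Finset (Fin n)) (hcrit : IsCriticalCut x U)
    (hmin : ∀ S : Finset (Fin n), S ⊂ U → ¬ IsCriticalCut x S) :
    ∀ S : Finset (Contracted U), ¬ IsCriticalCut (contractPoint x U) S := by
  obtain ⟨hθ0, hθ2, ⟨hdiag, hge, hle, hdegc, hsubt⟩, hvals, hdeg3, h1e⟩ := hx
  obtain ⟨hU1, hU2, hU3, hU4, hU5⟩ := hcrit
  have huniq : ∀ u ∈ U, ∀ q1 q2 : Fin n, q1 ∉ U → q2 ∉ U →
      0 < x s(u, q1) → 0 < x s(u, q2) → q1 = q2 := by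
    intro u hu q1 q2 hq1 hq2 hp1 hp2
    by_contra hne
    have hm1 : s(u, q1) ∈ cutEdges x U := mem_cutEdges.mpr ⟨⟨u, q1, rfl, hu, hq1⟩, hp1⟩
    have hm2 : s(u, q2) ∈ cutEdges x U := mem_cutEdges.mpr ⟨⟨u, q2, rfl, hu, hq2⟩, hp2⟩
    have hne' : s(u, q1) ≠ s(u, q2) := by
      intro h
      rcases Sym2.eq_iff.mp h with ⟨_, h2⟩ | ⟨h1, h2⟩
      · exact hne h2
      · exact hq2 (h1 ▸ hu)
    exact hU5 _ hm1 _ hm2 hne' u (by simp) (by simp)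
  have key : ∀ S : Finset (Contracted U), (none : Contracted U) ∉ S →
      ¬ IsCriticalCut (contractPoint x U) S := by
    intro S hnone hS
    obtain ⟨hS1, hS2, hS3, hS4, hS5⟩ := hS
    set S' : Finset (Fin n) := Finset.univ.filter (fun u => contractMap U u ∈ S) with hS'def
    have hmemS' : ∀ u : Fin n, u ∈ S' ↔ contractMap U u ∈ S := by
      intro u; simp [hS'def]
    have hS'U : S' ⊆ U := by
      intro u hu
      by_contra h
      exact hnone (contractMap_not_mem h ▸ (hmemS' u).mp hu)
    have hvalp : ∀ e ∈ cutEdges x S',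
        contractPoint x U (Sym2.map (contractMap U) e) = x e ∧
        Sym2.map (contractMap U) e ∈ cutEdges (contractPoint x U) S := by
      intro e he
      obtain ⟨⟨u, w, rfl, hu, hw⟩, hpos⟩ := mem_cutEdges.mp he
      have huU : u ∈ U := hS'U hu
      have huS : contractMap U u ∈ S := (hmemS' u).mp hu
      have hwS : contractMap U w ∉ S := fun h => hw ((hmemS' w).mpr h)
      rw [Sym2.map_pair_eq]
      by_cases hwU : w ∈ U
      · have hv := contractPoint_some_some hdiag huU hwU
        exact ⟨hv, mem_cutEdges.mpr ⟨⟨_, _, rfl, huS, hwS⟩, by rw [hv]; exact hpos⟩⟩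
      · rw [contractMap_not_mem hwU]
        have hv := contractPoint_some_none hdiag hge huU hwU
          (fun q' hq' hp' => huniq u huU q' w hq' hwU hp' hpos)
        exact ⟨hv, mem_cutEdges.mpr ⟨⟨_, _, rfl, huS, hnone⟩, by rw [hv]; exact hpos⟩⟩
    have hinj : Set.InjOn (Sym2.map (contractMap U)) (cutEdges x S' : Set (Sym2 (Fin n))) := by
      intro e1 he1 e2 he2 heq
      obtain ⟨⟨u1, w1, rfl, hu1, hw1⟩, hp1⟩ := mem_cutEdges.mp (Finset.mem_coe.mp he1)
      obtain ⟨⟨u2, w2, rfl, hu2, hw2⟩, hp2⟩ := mem_cutEdges.mp (Finset.mem_coe.mp he2)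
      rw [Sym2.map_pair_eq, Sym2.map_pair_eq, Sym2.eq_iff] at heq
      have hU1' := hS'U hu1
      have hU2' := hS'U hu2
      rcases heq with ⟨h1, h2⟩ | ⟨h1, h2⟩
      · have hueq : u1 = u2 := contractMap_eq_some hU2' h1
        subst hueq
        by_cases hw2U : w2 ∈ U
        · rw [contractMap_eq_some hw2U h2]
        · by_cases hw1U : w1 ∈ U
          · exact absurd (h2.trans (contractMap_not_mem hw2U)) (contractMap_ne_none hw1U)
          · rw [huniq u1 hU1' w1 w2 hw1U hw2U hp1 hp2]
      · have hw2e : w2 = u1 := contractMap_eq_some hU1' h1.symm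
        have hw1e : w1 = u2 := contractMap_eq_some hU2' h2
        rw [hw2e, hw1e, Sym2.eq_swap]
    have himg : cutEdges (contractPoint x U) S
        = (cutEdges x S').image (Sym2.map (contractMap U)) := by
      ext d
      constructor
      · intro hd
        obtain ⟨⟨a, b, rfl, haS, hbS⟩, hdpos⟩ := mem_cutEdges.mp hd
        rcases a with _ | ⟨u, hu⟩
        · exact absurd haS hnone
        rcases b with _ | ⟨w, hw⟩
        · rw [← contractMap_mem hu] at hdpos
          obtain ⟨q, hqU, hqpos⟩ := contractPoint_pos_none hu hdpos
          refine Finset.mem_image.mpr ⟨s(u, q), mem_cutEdges.mpr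
            ⟨⟨u, q, rfl, (hmemS' u).mpr (by rw [contractMap_mem hu]; exact haS),
              fun h => hqU (hS'U h)⟩, hqpos⟩, ?_⟩
          rw [Sym2.map_pair_eq, contractMap_mem hu, contractMap_not_mem hqU]
        · rw [← contractMap_mem hu, ← contractMap_mem hw] at hdpos
          rw [contractPoint_some_some hdiag hu hw] at hdpos
          refine Finset.mem_image.mpr ⟨s(u, w), mem_cutEdges.mpr
            ⟨⟨u, w, rfl, (hmemS' u).mpr (by rw [contractMap_mem hu]; exact haS),
              fun h => hbS (by rw [← contractMap_mem hw]; exact (hmemS' w).mp h)⟩, hdpos⟩, ?_⟩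
          rw [Sym2.map_pair_eq, contractMap_mem hu, contractMap_mem hw]
      · intro hd
        obtain ⟨e, he, rfl⟩ := Finset.mem_image.mp hd
        exact (hvalp e he).2
    have hcard3 : (cutEdges x S').card = 3 := by
      rw [himg, Finset.card_image_of_injOn hinj] at hS3
      exact hS3
    have h1card : ((cutEdges x S').filter fun e => x e = 1).card = 1 := by
      have hseteq : ((cutEdges (contractPoint x U) S).filter fun d => contractPoint x U d = 1)
          = ((cutEdges x S').filter fun e => x e = 1).image (Sym2.map (contractMap U)) := by
        ext d
        constructor
        · intro hd
          obtain ⟨hd', hd1⟩ := Finset.mem_filter.mp hd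
          obtain ⟨e, he, rfl⟩ := Finset.mem_image.mp (himg ▸ hd')
          exact Finset.mem_image.mpr ⟨e, Finset.mem_filter.mpr
            ⟨he, by rw [← (hvalp e he).1]; exact hd1⟩, rfl⟩
        · intro hd
          obtain ⟨e, he', rfl⟩ := Finset.mem_image.mp hd
          obtain ⟨he, he1⟩ := Finset.mem_filter.mp he'
          exact Finset.mem_filter.mpr ⟨(hvalp e he).2, by rw [(hvalp e he).1, he1]⟩
      rw [hseteq, Finset.card_image_of_injOn
        (hinj.mono (Finset.coe_subset.mpr (Finset.filter_subset _ _)))] at hS4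
      exact hS4
    have hdist : ∀ e ∈ cutEdges x S', ∀ f ∈ cutEdges x S', e ≠ f →
        ∀ w : Fin n, w ∈ e → w ∈ f → False := by
      intro e he f hf hef w hwe hwf
      refine hS5 _ (hvalp e he).2 _ (hvalp f hf).2
        (fun h => hef (hinj (Finset.mem_coe.mpr he) (Finset.mem_coe.mpr hf) h))
        (contractMap U w) ?_ ?_
      · exact Sym2.mem_map.mpr ⟨w, hwe, rfl⟩
      · exact Sym2.mem_map.mpr ⟨w, hwf, rfl⟩
    have hcardS' : 2 ≤ S'.card := by
      have hsub : S ⊆ S'.image (contractMap U) := by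
        intro a haS
        rcases a with _ | ⟨u, hu⟩
        · exact absurd haS hnone
        · exact Finset.mem_image.mpr ⟨u, (hmemS' u).mpr
            (by rw [contractMap_mem hu]; exact haS), contractMap_mem hu⟩
      calc 2 ≤ S.card := hS1
        _ ≤ (S'.image (contractMap U)).card := Finset.card_le_card hsub
        _ ≤ S'.card := Finset.card_image_le
    have hcardS'c : 2 ≤ S'ᶜ.card := by
      refine le_trans hU2 (Finset.card_le_card ?_)
      intro u hu
      exact Finset.mem_compl.mpr (fun h => Finset.mem_compl.mp hu (hS'U h))
    have hssub : S' ⊂ U := by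
      rw [Finset.ssubset_iff_of_subset hS'U]
      obtain ⟨a, ha, b, hb, hab⟩ := Finset.one_lt_card.mp (by omega : 1 < Sᶜ.card)
      have hwit : ∀ u : Fin n, ∀ h : u ∈ U, (some ⟨u, h⟩ : Contracted U) ∈ Sᶜ →
          ∃ v ∈ U, v ∉ S' := by
        intro u h hmem
        exact ⟨u, h, fun hin => Finset.mem_compl.mp hmem
          (by rw [← contractMap_mem h]; exact (hmemS' u).mp hin)⟩
      rcases a with _ | ⟨u, hu⟩
      · rcases b with _ | ⟨v, hv⟩
        · exact absurd rfl hab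
        · exact hwit v hv hb
      · exact hwit u hu ha
    exact hmin S' hssub ⟨hcardS', hcardS'c, hcard3, h1card, hdist⟩
  intro S hS
  by_cases hn' : (none : Contracted U) ∈ S
  · exact key Sᶜ (by simp [hn']) hS.compl
  · exact key S hn' hS

end TSPPaper
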